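/- Let 0 < q < 1, let A(ω) = a₁ω + a₀, B(ω) = b₂ω² + b₁ω + b₀ be real polynomials, and let ϱ : ℝ → ℝ satisfy the q-Pearson equation ∂_q(ϱ·B)(ω) = ϱ(ω)A(ω) for all ω ≠ 0. Fix n ∈ ℕ and set F₀(ω) := ϱ(ω)·∏_{j=0}^{n−1} B(q^{−j}ω). Then there exist real polynomials R_{k,n}, 0 ≤ k ≤ n, with deg R_{k,n} ≤ k, R_{0,n} ≡ 1, satisfying the recurrence R_{k+1,n}(ω) = A(ω)·R_{k,n}(qω) + B(q^{−(n−1−k)}ω)·(∂_q R_{k,n})(ω) + ((B(q^{−(n−1−k)}ω) − B(ω))/((1−q)ω))·R_{k,n}(qω) for 0 ≤ k ≤ n−1, such that for every ω ≠ 0: (∂_q^k F₀)(ω) = ϱ(ω)·(∏_{j=0}^{n−1−k} B(q^{−j}ω))·R_{k,n}(ω) for 0 ≤ k ≤ n−1, and (∂_q^n F₀)(ω) = ϱ(ω)·R_{n,n}(ω). -/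

import Mathlib

noncomputable def qD (q : ℝ) (f : ℝ → ℝ) (ω : ℝ) : ℝ :=
  (f ω - f (q * ω)) / ((1 - q) * ω)

open Polynomial

/-- scaling of the variable: `P(cX)`. -/
noncomputable def scl (c : ℝ) (P : Polynomial ℝ) : Polynomial ℝ := P.comp (C c * X)

lemma eval_scl (c : ℝ) (P : Polynomial ℝ) (ω : ℝ) : (scl c P).eval ω = P.eval (c * ω) := by
  simp [scl, eval_comp]

lemma natDegree_scl_le (c : ℝ) (P : Polynomial ℝ) : (scl c P).natDegree ≤ P.natDegree := by
  calc (scl c P).natDegree ≤ P.natDegree * (C c * X).natDegree := natDegree_comp_le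
    _ ≤ P.natDegree * 1 := Nat.mul_le_mul_left _ (by compute_degree)
    _ = P.natDegree := Nat.mul_one _

lemma scl_C (c a : ℝ) : scl c (Polynomial.C a) = Polynomial.C a := by simp [scl]

lemma divX_eval {Q : Polynomial ℝ} (h : Q.coeff 0 = 0) {ω : ℝ} (hω : ω ≠ 0) :
    Q.divX.eval ω = Q.eval ω / ω := by
  have := congrArg (Polynomial.eval ω) (X_mul_divX_add Q)
  rw [h] at this
  simp at this
  field_simp
  linarith [this]

/-- polynomial q-derivative -/
noncomputable def qDp (q : ℝ) (P : Polynomial ℝ) : Polynomial ℝ :=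
  C (1 - q)⁻¹ * (P - scl q P).divX

lemma coeff_zero_sub_scl (q : ℝ) (P : Polynomial ℝ) : (P - scl q P).coeff 0 = 0 := by
  simp [coeff_zero_eq_eval_zero, eval_scl]

lemma eval_qDp (q : ℝ) (hq : q ≠ 1) (P : Polynomial ℝ) {ω : ℝ} (hω : ω ≠ 0) :
    (qDp q P).eval ω = qD q (fun x => P.eval x) ω := by
  have h1q : (1 : ℝ) - q ≠ 0 := sub_ne_zero.2 hq.symm
  rw [qDp, eval_mul, eval_C, divX_eval (coeff_zero_sub_scl q P) hω, qD]
  rw [eval_sub, eval_scl]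
  field_simp

lemma natDegree_qDp_le (q : ℝ) (P : Polynomial ℝ) : (qDp q P).natDegree ≤ P.natDegree - 1 := by
  have h1 : (P - scl q P).natDegree ≤ P.natDegree :=
    (natDegree_sub_le _ _).trans (by simp [natDegree_scl_le])
  calc (qDp q P).natDegree ≤ 0 + (P - scl q P).divX.natDegree :=
        (natDegree_mul_le).trans (by simp)
    _ = (P - scl q P).natDegree - 1 := by
        rw [zero_add, natDegree_divX_eq_natDegree_tsub_one]
    _ ≤ P.natDegree - 1 := by omega

lemma qDp_C (q a : ℝ) : qDp q (Polynomial.C a) = 0 := by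
  simp [qDp, scl_C]

/-- the difference quotient polynomial `(B(cω) − B(ω))/((1−q)ω)` -/
noncomputable def qDiff (q c : ℝ) (B : Polynomial ℝ) : Polynomial ℝ :=
  C (1 - q)⁻¹ * (scl c B - B).divX

lemma eval_qDiff (q c : ℝ) (hq : q ≠ 1) (B : Polynomial ℝ) {ω : ℝ} (hω : ω ≠ 0) :
    (qDiff q c B).eval ω = (B.eval (c * ω) - B.eval ω) / ((1 - q) * ω) := by
  have h1q : (1 : ℝ) - q ≠ 0 := sub_ne_zero.2 hq.symm
  have h0 : (scl c B - B).coeff 0 = 0 := by simp [coeff_zero_eq_eval_zero, eval_scl]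
  rw [qDiff, eval_mul, eval_C, divX_eval h0 hω, eval_sub, eval_scl]
  field_simp

lemma natDegree_qDiff_le (q c : ℝ) (B : Polynomial ℝ) :
    (qDiff q c B).natDegree ≤ B.natDegree - 1 := by
  have h1 : (scl c B - B).natDegree ≤ B.natDegree :=
    (natDegree_sub_le _ _).trans (by simp [natDegree_scl_le])
  calc (qDiff q c B).natDegree ≤ 0 + (scl c B - B).divX.natDegree :=
        (natDegree_mul_le).trans (by simp)
    _ = (scl c B - B).natDegree - 1 := by
        rw [zero_add, natDegree_divX_eq_natDegree_tsub_one]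
    _ ≤ B.natDegree - 1 := by omega

theorem stmt_2 (q a₀ a₁ b₀ b₁ b₂ : ℝ) (hq0 : 0 < q) (hq1 : q < 1)
    (A B : Polynomial ℝ)
    (hA : A = Polynomial.C a₁ * Polynomial.X + Polynomial.C a₀)
    (hB : B = Polynomial.C b₂ * Polynomial.X ^ 2 + Polynomial.C b₁ * Polynomial.X
      + Polynomial.C b₀)
    (ϱ : ℝ → ℝ)
    (hPearson : ∀ ω : ℝ, ω ≠ 0 →
      qD q (fun x => ϱ x * B.eval x) ω = ϱ ω * A.eval ω)
    (n : ℕ) (F₀ : ℝ → ℝ)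
    (hF₀ : ∀ ω : ℝ, F₀ ω = ϱ ω * ∏ j ∈ Finset.range n, B.eval (q⁻¹ ^ j * ω)) :
    ∃ R : ℕ → Polynomial ℝ,
      (∀ k : ℕ, k ≤ n → (R k).natDegree ≤ k) ∧
      R 0 = 1 ∧
      (∀ k : ℕ, k + 1 ≤ n → ∀ ω : ℝ, ω ≠ 0 →
        (R (k + 1)).eval ω =
          A.eval ω * (R k).eval (q * ω)
          + B.eval (q⁻¹ ^ (n - 1 - k) * ω) * qD q (fun x => (R k).eval x) ω
          + (B.eval (q⁻¹ ^ (n - 1 - k) * ω) - B.eval ω) / ((1 - q) * ω)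
              * (R k).eval (q * ω)) ∧
      (∀ k : ℕ, k < n → ∀ ω : ℝ, ω ≠ 0 →
        (qD q)^[k] F₀ ω =
          ϱ ω * (∏ j ∈ Finset.range (n - k), B.eval (q⁻¹ ^ j * ω)) * (R k).eval ω) ∧
      (∀ ω : ℝ, ω ≠ 0 → (qD q)^[n] F₀ ω = ϱ ω * (R n).eval ω) := by
  have hq : q ≠ 0 := ne_of_gt hq0
  have hqne1 : q ≠ 1 := ne_of_lt hq1
  have h1q : (1 : ℝ) - q ≠ 0 := sub_ne_zero.2 (ne_of_gt (by linarith))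
  have hAdeg : A.natDegree ≤ 1 := by rw [hA]; compute_degree
  have hBdeg : B.natDegree ≤ 2 := by rw [hB]; compute_degree
  -- the recursive family of polynomials
  set R : ℕ → Polynomial ℝ := fun k => Nat.rec 1 (fun k Rk =>
    A * scl q Rk + scl (q⁻¹ ^ (n - 1 - k)) B * qDp q Rk
      + qDiff q (q⁻¹ ^ (n - 1 - k)) B * scl q Rk) k with hRdef
  have hR0 : R 0 = 1 := rfl
  have hRsucc : ∀ k : ℕ, R (k + 1) = A * scl q (R k)
      + scl (q⁻¹ ^ (n - 1 - k)) B * qDp q (R k)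
      + qDiff q (q⁻¹ ^ (n - 1 - k)) B * scl q (R k) := fun k => rfl
  -- degree bound
  have hdeg : ∀ k : ℕ, (R k).natDegree ≤ k := by
    intro k
    induction k with
    | zero => simp [hR0]
    | succ k ih =>
      rw [hRsucc k]
      refine (natDegree_add_le _ _).trans (max_le ((natDegree_add_le _ _).trans (max_le ?_ ?_)) ?_)
      · exact (natDegree_mul_le).trans (by
          have := natDegree_scl_le q (R k); omega)
      · by_cases h0 : (R k).natDegree = 0
        · obtain ⟨a, ha⟩ := natDegree_eq_zero.mp h0
          rw [← ha, qDp_C, mul_zero]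
          simp
        · refine (natDegree_mul_le).trans ?_
          have h1 := natDegree_scl_le (q⁻¹ ^ (n - 1 - k)) B
          have h2 := natDegree_qDp_le q (R k)
          omega
      · refine (natDegree_mul_le).trans ?_
        have h1 := natDegree_qDiff_le q (q⁻¹ ^ (n - 1 - k)) B
        have h2 := natDegree_scl_le q (R k)
        omega
  -- the recurrence, evaluated
  have hrec : ∀ k : ℕ, ∀ ω : ℝ, ω ≠ 0 →
      (R (k + 1)).eval ω =
        A.eval ω * (R k).eval (q * ω)
        + B.eval (q⁻¹ ^ (n - 1 - k) * ω) * qD q (fun x => (R k).eval x) ω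
        + (B.eval (q⁻¹ ^ (n - 1 - k) * ω) - B.eval ω) / ((1 - q) * ω)
            * (R k).eval (q * ω) := by
    intro k ω hω
    rw [hRsucc k]
    simp only [eval_add, eval_mul, eval_scl]
    rw [eval_qDp q hqne1 _ hω, eval_qDiff q _ hqne1 _ hω]
  -- Pearson, rearranged
  have hP2 : ∀ ω : ℝ, ω ≠ 0 →
      ϱ (q * ω) * B.eval (q * ω)
        = ϱ ω * B.eval ω - (1 - q) * ω * (ϱ ω * A.eval ω) := by
    intro ω hω
    have h := hPearson ω hω
    rw [qD] at h
    have hd : (1 - q) * ω ≠ 0 := mul_ne_zero h1q hω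
    field_simp at h
    linarith [h]
  -- the key induction
  have key : ∀ k : ℕ, k ≤ n → ∀ ω : ℝ, ω ≠ 0 →
      (qD q)^[k] F₀ ω =
        ϱ ω * (∏ j ∈ Finset.range (n - k), B.eval (q⁻¹ ^ j * ω)) * (R k).eval ω := by
    intro k
    induction k with
    | zero => intro _ ω hω; simp [hF₀, hR0]
    | succ k ih =>
      intro hk ω hω
      have hk' : k ≤ n := by omega
      have hqω : q * ω ≠ 0 := mul_ne_zero hq hω
      have hm : n - k = (n - 1 - k) + 1 := by omega
      have hm2 : n - (k + 1) = n - 1 - k := by omega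
      set m := n - 1 - k with hmdef
      rw [Function.iterate_succ_apply', qD, ih hk' ω hω, ih hk' (q * ω) hqω]
      -- rewrite the product at q·ω
      have hprodq : (∏ j ∈ Finset.range (n - k), B.eval (q⁻¹ ^ j * (q * ω)))
          = (∏ j ∈ Finset.range m, B.eval (q⁻¹ ^ j * ω)) * B.eval (q * ω) := by
        rw [hm, Finset.prod_range_succ']
        congr 1
        · apply Finset.prod_congr rfl
          intro j _
          congr 1
          rw [pow_succ]
          field_simp
        · simp
      have hprod : (∏ j ∈ Finset.range (n - k), B.eval (q⁻¹ ^ j * ω))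
          = (∏ j ∈ Finset.range m, B.eval (q⁻¹ ^ j * ω)) * B.eval (q⁻¹ ^ m * ω) := by
        rw [hm, Finset.prod_range_succ]
      have hd : (1 - q) * ω ≠ 0 := mul_ne_zero h1q hω
      have alg : ∀ (a e P r r' Bc Bq Bω aA d : ℝ), d ≠ 0 →
          e * Bq = a * Bω - d * (a * aA) →
          (a * (P * Bc) * r - e * (P * Bq) * r') / d
            = a * P * (aA * r' + Bc * ((r - r') / d) + (Bc - Bω) / d * r') := by
        intro a e P r r' Bc Bq Bω aA d hd hpe
        have h2 : e * (P * Bq) * r' = (a * Bω - d * (a * aA)) * (P * r') := by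
          rw [← hpe]; ring
        rw [h2]
        field_simp
        ring
      rw [hprodq, hprod, hm2, hrec k ω hω]
      simp only [qD]
      set P := ∏ j ∈ Finset.range m, B.eval (q⁻¹ ^ j * ω)
      exact alg (ϱ ω) (ϱ (q * ω)) P _ _ _ _ _ _ _ hd (hP2 ω hω)
  refine ⟨R, fun k _ => hdeg k, hR0, fun k _ ω hω => hrec k ω hω,
    fun k hk ω hω => key k (le_of_lt hk) ω hω, fun ω hω => ?_⟩
  have := key n le_rfl ω hω
  simpa using this
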